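/- (Basis property of the B_2 family, §3.2.) Under the stated hypotheses on q and Λ, the family {B_{2,i}(z,Λ)}_{i ∈ I_M}, regarded via the convention z_{N+1} := Λ·z_1 as polynomials in z_1,…,z_N, is a ℂ-basis of the space of homogeneous polynomials of total degree M in ℂ[z_1,…,z_N]; in particular it is linearly independent and |I_M| = binom(N+M−1, N−1) equals the dimension of that space. -/

import Mathlib

/-!
Basis property of the `B₂` family (§3.2): for generic `Λ`, the polynomials
`B_{2,i}(z,Λ)`, `i ∈ I_M`, form a ℂ-basis of the space of homogeneous
polynomials of total degree `M` in `ℂ[z_1,…,z_N]`.  Tuples `i ∈ I_M` are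
encoded 0-based as `i : Fin N → ℕ` with `∑ i_a = M`
(`I_M = Finset.Nat.antidiagonalTuple N M`); the convention `z_{N+1} = Λ·z_1`
means that the successor of the last variable is `Λ·z_1` (and `z_1 = X 0`).
-/

noncomputable section
open scoped Classical
open MvPolynomial
open Fin.NatCast

/-- the successor variable: `z_{a+2}` if `a+1 < N`, and `z_{N+1} = Λ·z_1`
for the last index. -/
def Xnext (Λ : ℂ) (N : ℕ) [NeZero N] (a : Fin N) : MvPolynomial (Fin N) ℂ :=
  if (a : ℕ) + 1 < N then X ((((a : ℕ) + 1 : ℕ)) : Fin N) else C Λ * X ((0 : ℕ) : Fin N)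

/-- the homogeneous degree-`M` polynomial
`B_{2,i}(z,Λ) = ∏_{a=1}^{N} ∏_{k=0}^{i_a−1} (z_{a+1} − q^k z_a)`. -/
def B2poly (q Λ : ℂ) (N : ℕ) [NeZero N] (i : Fin N → ℕ) : MvPolynomial (Fin N) ℂ :=
  ∏ a : Fin N, ∏ k ∈ Finset.range (i a), (Xnext Λ N a - C (q ^ k) * X a)

namespace B2aux

variable (q Λ : ℂ) (N : ℕ) [NeZero N]

/-- extend a tuple by zero -/
def jv (j : Fin N → ℕ) (b : ℕ) : ℕ := if h : b < N then j ⟨b, h⟩ else 0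

/-- partial sums of a tuple -/
def S (j : Fin N → ℕ) (n : ℕ) : ℕ := ∑ b ∈ Finset.range n, jv N j b

/-- the evaluation point attached to `j` -/
def pt (j : Fin N → ℕ) : Fin N → ℂ := fun a => q ^ S N j a.val

lemma jv_val (j : Fin N → ℕ) (a : Fin N) : jv N j a.val = j a := by
  simp [jv, a.isLt]

lemma S_succ (j : Fin N → ℕ) (a : Fin N) : S N j (a.val + 1) = S N j a.val + j a := by
  rw [S, Finset.sum_range_succ, ← S, jv_val]

lemma S_N (j : Fin N → ℕ) : S N j N = ∑ a, j a := by
  rw [S, ← Fin.sum_univ_eq_sum_range]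
  refine Finset.sum_congr rfl fun a _ => ?_
  simp [jv, a.isLt, Fin.eta]

lemma eval_Xnext (j : Fin N → ℕ) (a : Fin N) :
    eval (pt q N j) (Xnext Λ N a) =
      if a.val + 1 < N then q ^ S N j (a.val + 1) else Λ := by
  unfold Xnext
  split_ifs with h
  · rw [eval_X, pt, Fin.val_cast_of_lt h]
  · have h0 : ((0 : ℕ) : Fin N).val = 0 := by
      simp [Fin.val_cast_of_lt (Nat.pos_of_ne_zero (NeZero.ne N))]
    simp [pt, h0, S, mul_comm]

lemma eval_B2 (j i : Fin N → ℕ) :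
    eval (pt q N j) (B2poly q Λ N i) =
      ∏ a : Fin N, ∏ k ∈ Finset.range (i a),
        ((if a.val + 1 < N then q ^ S N j (a.val + 1) else Λ) - q ^ k * q ^ S N j a.val) := by
  unfold B2poly
  rw [map_prod]
  refine Finset.prod_congr rfl fun a _ => ?_
  rw [map_prod]
  refine Finset.prod_congr rfl fun k _ => ?_
  rw [map_sub, map_mul, eval_C, eval_X, eval_Xnext]
  rfl



lemma eval_B2_eq_zero (j i : Fin N → ℕ) (a : Fin N) (ha : a.val + 1 < N)
    (hja : j a < i a) : eval (pt q N j) (B2poly q Λ N i) = 0 := by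
  rw [eval_B2]
  refine Finset.prod_eq_zero (Finset.mem_univ a) ?_
  refine Finset.prod_eq_zero (Finset.mem_range.2 hja) ?_
  rw [if_pos ha, S_succ, pow_add]
  ring

lemma eval_B2_diag_ne_zero (hq0 : q ≠ 0) (hq : ∀ m : ℕ, 0 < m → q ^ m ≠ 1)
    {M : ℕ} (hΛ : ∀ m : ℕ, m < M → Λ ≠ q ^ m)
    (i : Fin N → ℕ) (hi : ∑ a, i a = M) :
    eval (pt q N i) (B2poly q Λ N i) ≠ 0 := by
  rw [eval_B2]
  rw [Finset.prod_ne_zero_iff]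
  intro a _
  rw [Finset.prod_ne_zero_iff]
  intro k hk
  rw [Finset.mem_range] at hk
  split_ifs with h
  · rw [S_succ, pow_add]
    have heq : q ^ S N i a.val * q ^ (i a) - q ^ k * q ^ S N i a.val
        = q ^ S N i a.val * (q ^ (i a) - q ^ k) := by ring
    rw [heq]
    refine mul_ne_zero (pow_ne_zero _ hq0) ?_
    rw [sub_ne_zero]
    intro he
    have : q ^ k * q ^ (i a - k) = q ^ k * 1 := by
      rw [mul_one, ← pow_add]
      rw [← he]
      congr 1
      omega
    have := mul_left_cancel₀ (pow_ne_zero k hq0) this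
    exact hq (i a - k) (by omega) this
  · -- a is the last index: a.val = N - 1
    have haN : a.val = N - 1 := by have := a.isLt; omega
    rw [sub_ne_zero, ← pow_add]
    have hSM : S N i a.val + i a = M := by
      have : a.val + 1 = N := by have := a.isLt; omega
      rw [← hi, ← S_N N i, ← S_succ, this]
    exact hΛ (k + S N i a.val) (by omega)

lemma B2_linearIndependent (hq0 : q ≠ 0) (hq : ∀ m : ℕ, 0 < m → q ^ m ≠ 1)
    (M : ℕ) (hΛ : ∀ m : ℕ, m < M → Λ ≠ q ^ m) :
    LinearIndependent ℂ
      (fun i : {i : Fin N → ℕ // i ∈ Finset.Nat.antidiagonalTuple N M} =>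
        B2poly q Λ N i.1) := by
  classical
  have hN : 0 < N := Nat.pos_of_ne_zero (NeZero.ne N)
  rw [Fintype.linearIndependent_iff]
  intro g hg
  by_contra hcon
  push_neg at hcon
  set F : {i : Fin N → ℕ // i ∈ Finset.Nat.antidiagonalTuple N M} → ℕ :=
    fun i => ∑ a ∈ Finset.univ.filter (fun a : Fin N => a.val + 1 < N), i.1 a with hF
  set T : Finset {i : Fin N → ℕ // i ∈ Finset.Nat.antidiagonalTuple N M} :=
    Finset.univ.filter (fun i => g i ≠ 0) with hT
  have hTne : T.Nonempty := by
    obtain ⟨i, hi⟩ := hcon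
    exact ⟨i, by simp [hT, hi]⟩
  obtain ⟨j, hjT, hjmin⟩ := T.exists_min_image F hTne
  have hgj : g j ≠ 0 := (Finset.mem_filter.1 hjT).2
  have hsumM : ∀ i : {i : Fin N → ℕ // i ∈ Finset.Nat.antidiagonalTuple N M},
      ∑ a, i.1 a = M := fun i => (Finset.Nat.mem_antidiagonalTuple).1 i.2
  have hsplit : ∀ i : {i : Fin N → ℕ // i ∈ Finset.Nat.antidiagonalTuple N M},
      F i + ∑ a ∈ Finset.univ.filter (fun a : Fin N => ¬ (a.val + 1 < N)), i.1 a = M := by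
    intro i
    rw [hF, Finset.sum_filter_add_sum_filter_not, hsumM]
  have h0 := congrArg (eval (pt q N j.1)) hg
  rw [map_sum, map_zero] at h0
  have hred : ∀ i : {i : Fin N → ℕ // i ∈ Finset.Nat.antidiagonalTuple N M},
      i ∈ Finset.univ → i ≠ j →
      eval (pt q N j.1) (g i • B2poly q Λ N i.1) = 0 := by
    intro i _ hij
    rcases eq_or_ne (g i) 0 with h | h
    · simp [h]
    have hiT : i ∈ T := by simp [hT, h]
    by_cases hex : ∃ a : Fin N, a.val + 1 < N ∧ j.1 a < i.1 a
    · obtain ⟨a, ha, hja⟩ := hex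
      rw [smul_eq_C_mul, map_mul]
      rw [eval_B2_eq_zero q Λ N j.1 i.1 a ha hja, mul_zero]
    · exfalso
      push_neg at hex
      have hle : ∀ a ∈ Finset.univ.filter (fun a : Fin N => a.val + 1 < N),
          i.1 a ≤ j.1 a := by
        intro a ha
        exact hex a (Finset.mem_filter.1 ha).2
      have hFle : F i ≤ F j := Finset.sum_le_sum hle
      have hFeq : F i = F j := le_antisymm hFle (hjmin i hiT)
      have hptwise : ∀ a ∈ Finset.univ.filter (fun a : Fin N => a.val + 1 < N),
          i.1 a = j.1 a := by
        intro a ha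
        by_contra hne
        have hlt : i.1 a < j.1 a := lt_of_le_of_ne (hle a ha) hne
        have h5 : F i < F j := Finset.sum_lt_sum hle ⟨a, ha, hlt⟩
        omega
      have hsing : Finset.univ.filter (fun a : Fin N => ¬ (a.val + 1 < N))
          = {(⟨N - 1, by omega⟩ : Fin N)} := by
        ext b
        simp only [Finset.mem_filter, Finset.mem_univ, true_and, Finset.mem_singleton]
        constructor
        · intro hb
          have := b.isLt
          exact Fin.ext (by simp only [Fin.val_mk]; omega)
        · intro hb
          subst hb
          simp only [not_lt]
          omega
      have hilast : i.1 ⟨N - 1, by omega⟩ = j.1 ⟨N - 1, by omega⟩ := by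
        have h1 := hsplit i
        have h2 := hsplit j
        rw [hsing, Finset.sum_singleton] at h1 h2
        omega
      apply hij
      apply Subtype.ext
      funext a
      by_cases ha : a.val + 1 < N
      · exact hptwise a (by simp [ha])
      · have haa : a = (⟨N - 1, by omega⟩ : Fin N) := by
          have := a.isLt
          exact Fin.ext (by simp only [Fin.val_mk]; omega)
        rw [haa]
        exact hilast
  rw [Finset.sum_eq_single_of_mem j (Finset.mem_univ j) hred] at h0
  rw [smul_eq_C_mul, map_mul, eval_C] at h0
  rcases mul_eq_zero.1 h0 with h | h
  · exact hgj h
  · exact eval_B2_diag_ne_zero q Λ N hq0 hq hΛ j.1 (hsumM j) h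

lemma B2_isHomogeneous (M : ℕ) (i : Fin N → ℕ) (hi : ∑ a, i a = M) :
    (B2poly q Λ N i).IsHomogeneous M := by
  rw [← hi]
  unfold B2poly
  refine MvPolynomial.IsHomogeneous.prod _ _ (fun a => i a) (fun a _ => ?_)
  have h1 : ∀ k ∈ Finset.range (i a),
      (Xnext Λ N a - C (q ^ k) * X a).IsHomogeneous 1 := by
    intro k _
    refine MvPolynomial.IsHomogeneous.sub ?_ ?_
    · unfold Xnext
      split_ifs with h
      · exact isHomogeneous_X _ _
      · simpa using (isHomogeneous_C _ Λ).mul (isHomogeneous_X ℂ ((0 : ℕ) : Fin N))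
    · simpa using (isHomogeneous_C _ (q ^ k)).mul (isHomogeneous_X ℂ a)
  have := MvPolynomial.IsHomogeneous.prod (Finset.range (i a)) _ (fun _ => 1) h1
  simpa using this

/-- the antidiagonal tuples are equivalent to `Sym (Fin N) M` -/
def symEquiv (M : ℕ) : Sym (Fin N) M ≃ {i : Fin N → ℕ // i ∈ Finset.Nat.antidiagonalTuple N M} :=
  (Sym.equivNatSumOfFintype (Fin N) M).trans
    (Equiv.subtypeEquivRight fun x => (Finset.Nat.mem_antidiagonalTuple).symm)

lemma card_antidiagonalTuple (M : ℕ) :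
    (Finset.Nat.antidiagonalTuple N M).card = (N + M - 1).choose (N - 1) := by
  have hN : 0 < N := Nat.pos_of_ne_zero (NeZero.ne N)
  have h1 : (Finset.Nat.antidiagonalTuple N M).card = Fintype.card (Sym (Fin N) M) := by
    rw [← Fintype.card_coe]
    exact (Fintype.card_congr (symEquiv N M)).symm
  rw [h1, Sym.card_sym_eq_choose, Fintype.card_fin]
  have h2 : N - 1 = (N + M - 1) - M := by omega
  rw [h2, Nat.choose_symm (by omega)]

/-- the degree-`M` finsupps are equivalent to the antidiagonal tuples -/
def degEquiv (M : ℕ) :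
    {d : Fin N →₀ ℕ // d.degree = M} ≃ {i : Fin N → ℕ // i ∈ Finset.Nat.antidiagonalTuple N M} := by
  have hdeg : ∀ d : Fin N →₀ ℕ, d.degree = ∑ a, d a := fun d => by
    rw [Finsupp.degree]
    exact Finset.sum_subset (Finset.subset_univ _)
      (fun x _ hx => Finsupp.notMem_support_iff.1 hx)
  exact (Finsupp.equivFunOnFinite.subtypeEquiv fun d => by rw [hdeg d]; rfl).trans
    (Equiv.subtypeEquivRight fun x => (Finset.Nat.mem_antidiagonalTuple).symm)

instance degFintype (M : ℕ) : Fintype {d : Fin N →₀ ℕ // d.degree = M} :=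
  Fintype.ofEquiv _ (degEquiv N M).symm

/-- the homogeneous submodule is linearly equivalent to finsupps on degree-`M` exponents -/
def homLinEquiv (M : ℕ) :
    (homogeneousSubmodule (Fin N) ℂ M) ≃ₗ[ℂ] ({d : Fin N →₀ ℕ // d.degree = M} →₀ ℂ) :=
  (LinearEquiv.ofEq _ _ (homogeneousSubmodule_eq_finsupp_supported (Fin N) ℂ M)).trans
    (AddMonoidAlgebra.supportedEquivFinsupp _)

lemma finrank_hom (M : ℕ) :
    Module.finrank ℂ (homogeneousSubmodule (Fin N) ℂ M)
      = (Finset.Nat.antidiagonalTuple N M).card := by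
  rw [(homLinEquiv N M).finrank_eq,
    (Finsupp.linearEquivFunOnFinite ℂ ℂ _).finrank_eq,
    Module.finrank_fintype_fun_eq_card, ← Fintype.card_coe]
  exact Fintype.card_congr (degEquiv N M)

instance homFinDim (M : ℕ) : FiniteDimensional ℂ (homogeneousSubmodule (Fin N) ℂ M) :=
  LinearEquiv.finiteDimensional (homLinEquiv N M).symm

end B2aux

/-- **Basis property (§3.2)**: the family `{B_{2,i}}_{i∈I_M}` is linearly
independent, spans the homogeneous polynomials of degree `M`, and
`|I_M| = binom(N+M−1, N−1)` equals the dimension of that space. -/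
theorem B2_basis (q : ℂ) (hq0 : q ≠ 0) (hq : ∀ m : ℕ, 0 < m → q ^ m ≠ 1)
    (N M : ℕ) [NeZero N] (Λ : ℂ) (hΛ0 : Λ ≠ 0) (hΛ : ∀ m : ℕ, m < M → Λ ≠ q ^ m) :
    LinearIndependent ℂ
      (fun i : {i : Fin N → ℕ // i ∈ Finset.Nat.antidiagonalTuple N M} =>
        B2poly q Λ N i.1)
    ∧ Submodule.span ℂ
        (Set.range (fun i : {i : Fin N → ℕ // i ∈ Finset.Nat.antidiagonalTuple N M} =>
          B2poly q Λ N i.1))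
      = MvPolynomial.homogeneousSubmodule (Fin N) ℂ M
    ∧ (Finset.Nat.antidiagonalTuple N M).card = Nat.choose (N + M - 1) (N - 1) := by
  have hli := B2aux.B2_linearIndependent q Λ N hq0 hq M hΛ
  refine ⟨hli, ?_, B2aux.card_antidiagonalTuple N M⟩
  have hle : Submodule.span ℂ
      (Set.range (fun i : {i : Fin N → ℕ // i ∈ Finset.Nat.antidiagonalTuple N M} =>
        B2poly q Λ N i.1)) ≤ MvPolynomial.homogeneousSubmodule (Fin N) ℂ M := by
    rw [Submodule.span_le]
    rintro p ⟨i, rfl⟩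
    exact (mem_homogeneousSubmodule M _).2
      (B2aux.B2_isHomogeneous q Λ N M i.1 ((Finset.Nat.mem_antidiagonalTuple).1 i.2))
  refine Submodule.eq_of_le_of_finrank_le hle ?_
  rw [finrank_span_eq_card hli, Fintype.card_coe, B2aux.finrank_hom N M]
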